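/- In the setting of Lemma 2.2 (x^†=0, σ_j²=e^{−j}, data y^δ = δZ) on the event Ω′_δ where (Z,u_j)=0 for m_δ ≤ j ≤ 2m_δ and |(Z,u_{m_δ−1})|=√2: for every k ≤ m_δ−1 one has Ψ_{2m_δ}(k, y^δ) := σ_k^{−1}·√(∑_{j=k}^{2m_δ}(y^δ,u_j)²) ≥ √2·e^{−(m_δ−1)}·δ > 0, while Ψ_{2m_δ}(m_δ, y^δ) = 0; consequently argmin_{k ≤ m_δ} Ψ_{2m_δ}(k,y^δ) ≥ m_δ. -/
import Mathlib


theorem stmt_15 (δ : ℝ) (hδ : 0 < δ) (hδ1 : δ < 1)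
    (mδ : ℕ) (hmδ : mδ = ⌈-3 * Real.log δ / (1 - Real.log 2)⌉₊ + 1)
    (z : ℕ → ℝ) (hz1 : |z (mδ - 1)| = Real.sqrt 2)
    (hz0 : ∀ j : ℕ, mδ ≤ j → j ≤ 2 * mδ → z j = 0)
    (Ψ : ℕ → ℝ)
    (hΨ : ∀ k, Ψ k = (Real.exp (-(k : ℝ) / 2))⁻¹ *
        Real.sqrt (∑ j ∈ Finset.Icc k (2 * mδ), (δ * z j) ^ 2)) :
    (∀ k : ℕ, k ≤ mδ - 1 → Real.sqrt 2 * Real.exp (-((mδ : ℝ) - 1)) * δ ≤ Ψ k) ∧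
    0 < Real.sqrt 2 * Real.exp (-((mδ : ℝ) - 1)) * δ ∧
    Ψ mδ = 0 ∧
    ∀ k : ℕ, k ≤ mδ → (∀ k' : ℕ, k' ≤ mδ → Ψ k ≤ Ψ k') → mδ ≤ k := by
  have hm1 : 1 ≤ mδ := by omega
  have hc : (0:ℝ) < Real.sqrt 2 * Real.exp (-((mδ : ℝ) - 1)) * δ := by
    positivity
  have hlow : ∀ k : ℕ, k ≤ mδ - 1 → Real.sqrt 2 * Real.exp (-((mδ : ℝ) - 1)) * δ ≤ Ψ k := by
    intro k hk
    rw [hΨ]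
    have hmem : mδ - 1 ∈ Finset.Icc k (2 * mδ) := by
      simp only [Finset.mem_Icc]; omega
    have hterm : (δ * z (mδ - 1)) ^ 2 = 2 * δ ^ 2 := by
      have h2 : (δ * z (mδ - 1)) ^ 2 = δ ^ 2 * |z (mδ - 1)| ^ 2 := by
        rw [mul_pow, sq_abs]
      rw [h2, hz1, Real.sq_sqrt (by norm_num : (0:ℝ) ≤ 2)]
      ring
    have hsum : 2 * δ ^ 2 ≤ ∑ j ∈ Finset.Icc k (2 * mδ), (δ * z j) ^ 2 := by
      rw [← hterm]
      exact Finset.single_le_sum (f := fun j => (δ * z j) ^ 2) (fun j _ => sq_nonneg _) hmem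
    have hsqrt : Real.sqrt 2 * δ ≤ Real.sqrt (∑ j ∈ Finset.Icc k (2 * mδ), (δ * z j) ^ 2) := by
      have h3 : Real.sqrt (2 * δ ^ 2) ≤ Real.sqrt (∑ j ∈ Finset.Icc k (2 * mδ), (δ * z j) ^ 2) :=
        Real.sqrt_le_sqrt hsum
      calc Real.sqrt 2 * δ = Real.sqrt (2 * δ ^ 2) := by
              rw [Real.sqrt_mul (by norm_num), Real.sqrt_sq hδ.le]
        _ ≤ _ := h3
    have h1 : (1:ℝ) ≤ (Real.exp (-(k : ℝ) / 2))⁻¹ := by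
      rw [one_le_inv_iff₀]
      refine ⟨Real.exp_pos _, ?_⟩
      rw [← Real.exp_zero]
      apply Real.exp_le_exp.mpr
      have : (0:ℝ) ≤ (k:ℝ) := Nat.cast_nonneg k
      linarith
    have he1 : Real.exp (-((mδ : ℝ) - 1)) ≤ 1 := by
      apply Real.exp_le_one_iff.mpr
      have : (1:ℝ) ≤ (mδ:ℝ) := by exact_mod_cast hm1
      linarith
    calc Real.sqrt 2 * Real.exp (-((mδ : ℝ) - 1)) * δ
        ≤ Real.sqrt 2 * 1 * δ := by
          apply mul_le_mul_of_nonneg_right _ hδ.le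
          exact mul_le_mul_of_nonneg_left he1 (Real.sqrt_nonneg 2)
      _ = Real.sqrt 2 * δ := by ring
      _ ≤ 1 * Real.sqrt (∑ j ∈ Finset.Icc k (2 * mδ), (δ * z j) ^ 2) := by
          rw [one_mul]; exact hsqrt
      _ ≤ (Real.exp (-(k : ℝ) / 2))⁻¹ *
            Real.sqrt (∑ j ∈ Finset.Icc k (2 * mδ), (δ * z j) ^ 2) :=
          mul_le_mul_of_nonneg_right h1 (Real.sqrt_nonneg _)
  have hzero : Ψ mδ = 0 := by
    rw [hΨ]
    have h4 : ∑ j ∈ Finset.Icc mδ (2 * mδ), (δ * z j) ^ 2 = 0 := by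
      apply Finset.sum_eq_zero
      intro j hj
      simp only [Finset.mem_Icc] at hj
      rw [hz0 j hj.1 hj.2]
      ring
    rw [h4, Real.sqrt_zero, mul_zero]
  refine ⟨hlow, hc, hzero, ?_⟩
  intro k hk hmin
  by_contra h
  push_neg at h
  have hk' : k ≤ mδ - 1 := by omega
  have h5 := hlow k hk'
  have h6 := hmin mδ le_rfl
  rw [hzero] at h6
  linarith
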